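/- (Le Page–Kaplansky for C*-algebras) Let A be a C*-algebra. Then A is commutative if and only if there exists γ > 0 such that ‖ab‖ ≤ γ‖ba‖ for all a, b ∈ A. -/

import Mathlib

open Unitization Filter Topology NormedSpace

section LePageHelpers

variable {A : Type*} [NonUnitalCStarAlgebra A]

lemma lp_approx (z x : A) :
    ∃ e : ℕ → A, Tendsto (fun n => z * e n) atTop (𝓝 z) ∧
      Tendsto (fun n => e n * x) atTop (𝓝 x) := by
  letI : PartialOrder (Unitization ℂ A) := CStarAlgebra.spectralOrder _
  letI : StarOrderedRing (Unitization ℂ A) := CStarAlgebra.spectralOrderedRing _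
  set w : A := star z * z + x * star x with hw
  set W : Unitization ℂ A := (w : Unitization ℂ A) with hWdef
  have hWeq : W = star (z : Unitization ℂ A) * z + (x : Unitization ℂ A) * star (x : Unitization ℂ A) := by
    simp [hWdef, hw]
  have hW : (0 : Unitization ℂ A) ≤ W := by
    rw [hWeq]
    exact add_nonneg (star_mul_self_nonneg _) (mul_star_self_nonneg _)
  have hWsa : IsSelfAdjoint W := .of_nonneg hW
  set N : ℕ → ℝ := fun n => (n : ℝ) + 1 with hN
  have hNpos : ∀ n, (0:ℝ) < N n := fun n => by positivity
  set f : ℕ → ℝ → ℝ := fun n t => 1 - (1 + N n * max t 0)⁻¹ with hf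
  have hfc : ∀ n, Continuous (f n) := by
    intro n
    apply continuous_const.sub
    apply Continuous.inv₀
    · fun_prop
    · intro t
      have : (0:ℝ) ≤ max t 0 := le_max_right _ _
      have := hNpos n
      positivity
  have hf0 : ∀ n, f n 0 = 0 := fun n => by simp [hf]
  have hfc1 : ∀ n, Continuous (fun t => f n t - 1) := fun n => (hfc n).sub continuous_const
  -- the inr of cfcₙ is cfc of inr
  have hEn : ∀ n, ((cfcₙ (f n) w : A) : Unitization ℂ A) = cfc (f n) W :=
    fun n => cfcₙ_eq_cfc_inr (fun {a} => isSelfAdjoint_inr) w (f n) (hf0 n)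
  -- the key uniform bound
  have key : ∀ n (y : Unitization ℂ A), star y * y ≤ W →
      ‖y * (cfc (f n) W - 1)‖ ≤ Real.sqrt ((4 * N n)⁻¹) := by
    intro n y hyW
    set C : Unitization ℂ A := cfc (f n) W - 1 with hCdef
    have hCsa : IsSelfAdjoint C := (cfc_predicate (f n) W).sub (.one _)
    have hC' : C = cfc (fun t => f n t - 1) W := by
      rw [cfc_sub _ _ W (hfc n).continuousOn continuousOn_const, cfc_const_one ℝ W hWsa]
    have h4 : star C * W * C = cfc (fun t => (f n t - 1) * t * (f n t - 1)) W := by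
      have : cfc (fun t => (f n t - 1) * t * (f n t - 1)) W = star C * W * C := by
        calc cfc (fun t => (f n t - 1) * t * (f n t - 1)) W
            = cfc (fun t => (f n t - 1) * t) W * cfc (fun t => f n t - 1) W :=
              cfc_mul _ _ W (((hfc1 n).mul continuous_id).continuousOn) ((hfc1 n).continuousOn)
          _ = cfc (fun t => f n t - 1) W * cfc (fun t : ℝ => t) W * cfc (fun t => f n t - 1) W := by
              rw [cfc_mul (fun t => f n t - 1) (fun t : ℝ => t) W ((hfc1 n).continuousOn)
                (continuous_id.continuousOn)]
          _ = star C * W * C := by rw [cfc_id' ℝ W hWsa, ← hC', hCsa.star_eq]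
      exact this.symm
    have h5 : ‖cfc (fun t => (f n t - 1) * t * (f n t - 1)) W‖ ≤ (4 * N n)⁻¹ := by
      apply norm_cfc_le (by have := hNpos n; positivity)
      intro t ht
      have ht0 : (0:ℝ) ≤ t := spectrum_nonneg_of_nonneg hW ht
      have hmax : max t 0 = t := max_eq_left ht0
      have hd : (0:ℝ) < 1 + N n * t := by have := hNpos n; positivity
      have hval : (f n t - 1) * t * (f n t - 1) = t / (1 + N n * t) ^ 2 := by
        rw [hf]; simp only [hmax]
        field_simp
        try ring
        try tauto
      rw [hval, Real.norm_eq_abs, abs_of_nonneg (by positivity), inv_eq_one_div,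
        div_le_div_iff₀ (by positivity) (by have := hNpos n; positivity)]
      nlinarith [hNpos n, sq_nonneg (1 - N n * t)]
    -- put it together
    have h1 : ‖y * C‖ ^ 2 = ‖star C * (star y * y) * C‖ := by
      rw [sq, ← CStarRing.norm_star_mul_self]
      congr 1
      rw [star_mul]
      simp only [mul_assoc]
    have h2 : ‖star C * (star y * y) * C‖ ≤ (4 * N n)⁻¹ := by
      refine le_trans (CStarAlgebra.norm_le_norm_of_nonneg_of_le
        (star_left_conjugate_nonneg (star_mul_self_nonneg y) C) (star_left_conjugate_le_conjugate hyW C)) ?_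
      rw [h4]
      exact h5
    refine (Real.le_sqrt (norm_nonneg _) (by have := hNpos n; positivity)).mpr ?_
    rw [h1]; exact h2
  have hsqrt : Tendsto (fun n => Real.sqrt ((4 * N n)⁻¹)) atTop (𝓝 0) := by
    have h0 : Tendsto (fun n : ℕ => (4 * N n)⁻¹) atTop (𝓝 0) := by
      apply tendsto_inv_atTop_zero.comp
      rw [hN]
      apply Tendsto.const_mul_atTop (by norm_num : (0:ℝ) < 4)
      exact tendsto_atTop_add_const_right _ _ tendsto_natCast_atTop_atTop
    exact (Real.continuous_sqrt.tendsto' 0 0 Real.sqrt_zero).comp h0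
  refine ⟨fun n => cfcₙ (f n) w, ?_, ?_⟩
  · rw [tendsto_iff_norm_sub_tendsto_zero]
    apply squeeze_zero (fun n => norm_nonneg _) _ hsqrt
    intro n
    have heq : ((z * cfcₙ (f n) w - z : A) : Unitization ℂ A)
        = (z : Unitization ℂ A) * (cfc (f n) W - 1) := by
      rw [mul_sub, mul_one, inr_sub ℂ, inr_mul ℂ, hEn n]
    rw [← norm_inr (𝕜 := ℂ) (z * cfcₙ (f n) w - z), heq]
    exact key n z (hWeq ▸ le_add_of_nonneg_right (mul_star_self_nonneg _))
  · rw [tendsto_iff_norm_sub_tendsto_zero]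
    apply squeeze_zero (fun n => norm_nonneg _) _ hsqrt
    intro n
    have hCsa : IsSelfAdjoint (cfc (f n) W - 1) :=
      (cfc_predicate (f n) W).sub (.one _)
    have heq : ((cfcₙ (f n) w * x - x : A) : Unitization ℂ A)
        = star (star (x : Unitization ℂ A) * (cfc (f n) W - 1)) := by
      rw [star_mul, star_star, hCsa.star_eq, sub_mul, one_mul, inr_sub ℂ, inr_mul ℂ, hEn n]
    rw [← norm_inr (𝕜 := ℂ) (cfcₙ (f n) w * x - x), heq, norm_star]
    refine key n (star (x : Unitization ℂ A)) ?_
    rw [star_star]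
    exact hWeq ▸ le_add_of_nonneg_left (star_mul_self_nonneg _)


lemma lp_inr_mul (x : A) (m : Unitization ℂ A) :
    (x : Unitization ℂ A) * m = ((m.fst • x + x * m.snd : A) : Unitization ℂ A) := by
  ext <;> simp

lemma lp_mul_inr (x : A) (m : Unitization ℂ A) :
    m * (x : Unitization ℂ A) = ((m.fst • x + m.snd * x : A) : Unitization ℂ A) := by
  ext <;> simp


lemma lp_key {γ : ℝ} (h : ∀ a b : A, ‖a * b‖ ≤ γ * ‖b * a‖) (x : A) (m : Unitization ℂ A) :
    ‖(x : Unitization ℂ A) * m‖ ≤ γ * ‖m * (x : Unitization ℂ A)‖ := by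
  set z : A := m.fst • x + x * m.snd with hzdef
  have hz : ((z : A) : Unitization ℂ A) = (x : Unitization ℂ A) * m := (lp_inr_mul x m).symm
  obtain ⟨e, hez, hex⟩ := lp_approx z x
  have step : ∀ n, ‖z * e n‖ ≤ γ * ‖m * ((e n * x : A) : Unitization ℂ A)‖ := by
    intro n
    have h1 := h x (m.fst • e n + m.snd * e n)
    have hc : ((m.fst • e n + m.snd * e n : A) : Unitization ℂ A) = m * (e n : Unitization ℂ A) :=
      (lp_mul_inr (e n) m).symm
    have h2 : x * (m.fst • e n + m.snd * e n) = z * e n := by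
      apply inr_injective (R := ℂ)
      rw [inr_mul ℂ, hc, ← mul_assoc, ← hz, ← inr_mul ℂ]
    have h3 : ‖(m.fst • e n + m.snd * e n) * x‖ = ‖m * ((e n * x : A) : Unitization ℂ A)‖ := by
      rw [← norm_inr (𝕜 := ℂ) ((m.fst • e n + m.snd * e n) * x), inr_mul ℂ, hc, mul_assoc,
        ← inr_mul ℂ]
    rw [h2, h3] at h1
    exact h1
  have l1 : Tendsto (fun n => ‖z * e n‖) atTop (𝓝 ‖z‖) := hez.norm
  have l2 : Tendsto (fun n => γ * ‖m * ((e n * x : A) : Unitization ℂ A)‖) atTop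
      (𝓝 (γ * ‖m * (x : Unitization ℂ A)‖)) := by
    have hi : Tendsto (fun n => ((e n * x : A) : Unitization ℂ A)) atTop
        (𝓝 (x : Unitization ℂ A)) := by
      rw [tendsto_iff_norm_sub_tendsto_zero]
      have := tendsto_iff_norm_sub_tendsto_zero.mp hex
      simp only [← inr_sub ℂ, norm_inr]
      exact this
    exact (((continuous_mul_left m).tendsto _).comp hi).norm.const_mul γ
  have := le_of_tendsto_of_tendsto' l1 l2 step
  rw [← hz, norm_inr]
  exact this

theorem lp_main {γ : ℝ} (hγ : 0 < γ) (h : ∀ a b : A, ‖a * b‖ ≤ γ * ‖b * a‖) (a b : A) :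
    a * b = b * a := by
  set B := Unitization ℂ A
  set a' : B := (a : B) with ha'
  have hinv : ∀ l : ℂ, exp (l • (-a')) * exp (l • a') = 1 := by
    intro l
    letI : NormedAlgebra ℚ B := NormedAlgebra.restrictScalars ℚ ℂ B
    rw [← exp_add_of_commute (by rw [smul_neg]; exact (Commute.refl _).neg_left)]
    rw [smul_neg, neg_add_cancel, exp_zero]
  set F : ℂ → B := fun l => exp (l • a') * (b : B) * exp (l • (-a')) with hF
  have hdF : Differentiable ℂ F := by
    have d1 : Differentiable ℂ (fun l : ℂ => exp (l • a')) :=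
      fun t => (hasDerivAt_exp_smul_const a' t).differentiableAt
    have d2 : Differentiable ℂ (fun l : ℂ => exp (l • (-a'))) :=
      fun t => (hasDerivAt_exp_smul_const (-a') t).differentiableAt
    exact (d1.mul (differentiable_const _)).mul d2
  have hbd : ∀ l, ‖F l‖ ≤ γ * ‖b‖ := by
    intro l
    set m := exp (l • a') with hm
    have hx : ((m.fst • b + m.snd * b : A) : B) = m * (b : B) := (lp_mul_inr b m).symm
    calc ‖F l‖ = ‖((m.fst • b + m.snd * b : A) : B) * exp (l • (-a'))‖ := by
          rw [hx, hF]
      _ ≤ γ * ‖exp (l • (-a')) * ((m.fst • b + m.snd * b : A) : B)‖ := lp_key h _ _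
      _ = γ * ‖b‖ := by rw [hx, ← mul_assoc, hinv, one_mul, norm_inr]
  have hbdd : Bornology.IsBounded (Set.range F) :=
    isBounded_iff_forall_norm_le.2 ⟨γ * ‖b‖, by rintro _ ⟨l, rfl⟩; exact hbd l⟩
  have hF0 : F 0 = (b : B) := by
    simp [hF, zero_smul, exp_zero]
  have hcomm : ∀ l : ℂ, exp (l • a') * (b : B) = (b : B) * exp (l • a') := by
    intro l
    have hFc : F l = (b : B) := (hdF.apply_eq_apply_of_bounded hbdd l 0).trans hF0
    calc exp (l • a') * (b : B)
        = exp (l • a') * (b : B) * (exp (l • (-a')) * exp (l • a')) := by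
          rw [hinv, mul_one]
      _ = F l * exp (l • a') := by rw [hF]; simp only [mul_assoc]
      _ = (b : B) * exp (l • a') := by rw [hFc]
  have hG : HasDerivAt (fun l : ℂ => exp (l • a') * (b : B))
      (exp ((0:ℂ) • a') * a' * (b : B)) 0 :=
    (hasDerivAt_exp_smul_const a' 0).mul_const _
  have hH : HasDerivAt (fun l : ℂ => exp (l • a') * (b : B))
      ((b : B) * (exp ((0:ℂ) • a') * a')) 0 := by
    have heqf : (fun l : ℂ => (b : B) * exp (l • a')) = fun l => exp (l • a') * (b : B) :=
      funext fun l => (hcomm l).symm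
    exact heqf ▸ ((hasDerivAt_exp_smul_const a' 0).const_mul (b : B))
  have hu := hG.unique hH
  simp only [zero_smul, exp_zero, one_mul] at hu
  have : ((a * b : A) : B) = ((b * a : A) : B) := by
    rw [inr_mul ℂ, inr_mul ℂ]
    exact hu
  exact inr_injective (R := ℂ) this

end LePageHelpers

theorem stmt_18 (A : Type*) [NonUnitalNormedRing A] [StarRing A] [CStarRing A]
    [NormedSpace ℂ A] [IsScalarTower ℂ A A] [SMulCommClass ℂ A A] [StarModule ℂ A]
    [CompleteSpace A] :
    (∀ a b : A, a * b = b * a) ↔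
      ∃ γ : ℝ, 0 < γ ∧ ∀ a b : A, ‖a * b‖ ≤ γ * ‖b * a‖ := by
  constructor
  · intro h
    exact ⟨1, one_pos, fun a b => by rw [h a b, one_mul]⟩
  · rintro ⟨γ, hγ, h⟩ a b
    letI : NonUnitalCStarAlgebra A := {}
    exact lp_main hγ h a b
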